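/- Let Ω be a measure space and 1 ≤ p < ∞. Suppose D ⊆ L^p(Ω) is a collection of vectors that forms a simple lower semilattice under the subvector order, such that the upper semilattice generated by the supports of the vectors in D is dense in Ω (i.e., every measurable set of finite measure can be approximated in measure of symmetric difference by finite unions of supports of elements of D). Then the linear span of D is dense in L^p(Ω). -/

import Mathlib

set_option linter.unusedSectionVars false

open MeasureTheory Set
open scoped symmDiff ENNReal NNReal

variable {X : Type*} [MeasurableSpace X]

def Subvec (μ : Measure X) (f g : X → ℂ) : Prop :=
  ∀ᵐ t ∂μ, f t ≠ 0 → f t = g t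

namespace Stmt9Aux

noncomputable section
open Classical

def Approx (μ : Measure X) (q : ℝ≥0∞) (D : Set (X → ℂ)) (f : X → ℂ) : Prop :=
  ∀ ε : ℝ≥0∞, 0 < ε → ∃ (n : ℕ) (c : Fin n → ℂ) (g : Fin n → (X → ℂ)),
    (∀ i, g i ∈ D) ∧ eLpNorm (fun t => f t - ∑ i, c i * g i t) q μ < ε

variable {μ : Measure X} {q : ℝ≥0∞} {D : Set (X → ℂ)}

lemma comboAESM (hD : ∀ f ∈ D, MemLp f q μ) {n : ℕ} (c : Fin n → ℂ) {g : Fin n → (X → ℂ)}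
    (hg : ∀ i, g i ∈ D) : AEStronglyMeasurable (fun t => ∑ i, c i * g i t) μ :=
  Finset.aestronglyMeasurable_fun_sum _ fun i _ =>
    ((hD (g i) (hg i)).aestronglyMeasurable).const_mul (c i)

lemma L_ae {f f' : X → ℂ} (h : f =ᵐ[μ] f') (hf : Approx μ q D f) : Approx μ q D f' := by
  intro ε hε
  obtain ⟨n, c, g, hg, hlt⟩ := hf ε hε
  refine ⟨n, c, g, hg, ?_⟩
  have : (fun t => f t - ∑ i, c i * g i t) =ᵐ[μ] (fun t => f' t - ∑ i, c i * g i t) :=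
    h.mono fun t ht => by simp [ht]
  rwa [eLpNorm_congr_ae this] at hlt

lemma L_zero : Approx μ q D (fun _ => 0) := by
  intro ε hε
  refine ⟨0, Fin.elim0, Fin.elim0, fun i => i.elim0, ?_⟩
  simpa using hε

lemma L_mem {f : X → ℂ} (hf : f ∈ D) : Approx μ q D f := by
  intro ε hε
  refine ⟨1, fun _ => 1, fun _ => f, fun _ => hf, ?_⟩
  have : (fun t => f t - ∑ i : Fin 1, 1 * f t) = fun _ => (0 : ℂ) := by
    funext t; simp
  rw [this]
  simpa using hε

lemma L_add (hq1 : 1 ≤ q) (hD : ∀ f ∈ D, MemLp f q μ) {f f' : X → ℂ}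
    (hfm : AEStronglyMeasurable f μ) (hfm' : AEStronglyMeasurable f' μ)
    (hf : Approx μ q D f) (hf' : Approx μ q D f') :
    Approx μ q D (fun t => f t + f' t) := by
  intro ε hε
  obtain ⟨n₁, c₁, g₁, hg₁, hlt₁⟩ := hf (ε / 2) (ENNReal.half_pos hε.ne' |>.trans_le le_rfl)
  obtain ⟨n₂, c₂, g₂, hg₂, hlt₂⟩ := hf' (ε / 2) (ENNReal.half_pos hε.ne')
  refine ⟨n₁ + n₂, Fin.append c₁ c₂, Fin.append g₁ g₂, ?_, ?_⟩
  · intro i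
    refine Fin.addCases (fun j => ?_) (fun j => ?_) i
    · rw [Fin.append_left]; exact hg₁ j
    · rw [Fin.append_right]; exact hg₂ j
  · have hsum : ∀ t, ∑ i : Fin (n₁ + n₂), Fin.append c₁ c₂ i * Fin.append g₁ g₂ i t
        = (∑ i : Fin n₁, c₁ i * g₁ i t) + ∑ i : Fin n₂, c₂ i * g₂ i t := by
      intro t
      rw [Fin.sum_univ_add]
      simp [Fin.append_left, Fin.append_right]
    have heq : (fun t => (f t + f' t) - ∑ i, Fin.append c₁ c₂ i * Fin.append g₁ g₂ i t)
        = fun t => (f t - ∑ i, c₁ i * g₁ i t) + (f' t - ∑ i, c₂ i * g₂ i t) := by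
      funext t; rw [hsum]; ring
    rw [heq]
    calc eLpNorm _ q μ
        ≤ eLpNorm (fun t => f t - ∑ i, c₁ i * g₁ i t) q μ
          + eLpNorm (fun t => f' t - ∑ i, c₂ i * g₂ i t) q μ :=
          eLpNorm_add_le (hfm.sub (comboAESM hD c₁ hg₁)) (hfm'.sub (comboAESM hD c₂ hg₂)) hq1
      _ < ε / 2 + ε / 2 := ENNReal.add_lt_add hlt₁ hlt₂
      _ = ε := ENNReal.add_halves ε

lemma L_smul {f : X → ℂ} (a : ℂ) (hf : Approx μ q D f) :
    Approx μ q D (fun t => a * f t) := by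
  rcases eq_or_ne a 0 with rfl | ha
  · have : (fun t => (0:ℂ) * f t) = fun _ => (0:ℂ) := by funext t; simp
    rw [this]; exact L_zero
  · intro ε hε
    have hae : (‖a‖₊ : ℝ≥0∞) ≠ 0 := by simpa using ha
    have haet : (‖a‖₊ : ℝ≥0∞) ≠ ∞ := ENNReal.coe_ne_top
    obtain ⟨n, c, g, hg, hlt⟩ := hf (ε / ‖a‖₊) (ENNReal.div_pos hε.ne' haet)
    refine ⟨n, fun i => a * c i, g, hg, ?_⟩
    have heq : (fun t => a * f t - ∑ i, (a * c i) * g i t)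
        = a • (fun t => f t - ∑ i, c i * g i t) := by
      funext t
      simp only [Pi.smul_apply, smul_eq_mul, mul_sub, Finset.mul_sum, mul_assoc]
    rw [heq, eLpNorm_const_smul]
    calc (‖a‖₊ : ℝ≥0∞) * eLpNorm (fun t => f t - ∑ i, c i * g i t) q μ
        < ‖a‖₊ * (ε / ‖a‖₊) := (ENNReal.mul_lt_mul_iff_right hae haet).mpr hlt
      _ = ε := ENNReal.mul_div_cancel hae haet

lemma L_sub (hq1 : 1 ≤ q) (hD : ∀ f ∈ D, MemLp f q μ) {f f' : X → ℂ}
    (hfm : AEStronglyMeasurable f μ) (hfm' : AEStronglyMeasurable f' μ)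
    (hf : Approx μ q D f) (hf' : Approx μ q D f') :
    Approx μ q D (fun t => f t - f' t) := by
  have h := L_add hq1 hD hfm (hfm'.const_mul (-1)) hf (L_smul (-1) hf')
  have : (fun t => f t + (-1) * f' t) = fun t => f t - f' t := by funext t; ring
  rwa [this] at h

lemma L_close (hq1 : 1 ≤ q) (hD : ∀ f ∈ D, MemLp f q μ) {f : X → ℂ}
    (hfm : AEStronglyMeasurable f μ)
    (h : ∀ δ : ℝ≥0∞, 0 < δ → ∃ f' : X → ℂ, AEStronglyMeasurable f' μ ∧ Approx μ q D f' ∧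
      eLpNorm (fun t => f t - f' t) q μ < δ) : Approx μ q D f := by
  intro ε hε
  obtain ⟨f', hf'm, hf'a, hclose⟩ := h (ε / 2) (ENNReal.half_pos hε.ne')
  obtain ⟨n, c, g, hg, hlt⟩ := hf'a (ε / 2) (ENNReal.half_pos hε.ne')
  refine ⟨n, c, g, hg, ?_⟩
  have heq : (fun t => f t - ∑ i, c i * g i t)
      = fun t => (f t - f' t) + (f' t - ∑ i, c i * g i t) := by funext t; ring
  rw [heq]
  calc eLpNorm _ q μ
      ≤ eLpNorm (fun t => f t - f' t) q μ + eLpNorm (fun t => f' t - ∑ i, c i * g i t) q μ :=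
        eLpNorm_add_le (hfm.sub hf'm) (hf'm.sub (comboAESM hD c hg)) hq1
    _ < ε / 2 + ε / 2 := ENNReal.add_lt_add hclose hlt
    _ = ε := ENNReal.add_halves ε

lemma L_sum (hq1 : 1 ≤ q) (hD : ∀ f ∈ D, MemLp f q μ) {ι : Type*} (s : Finset ι)
    (f : ι → X → ℂ) (hm : ∀ i ∈ s, AEStronglyMeasurable (f i) μ)
    (ha : ∀ i ∈ s, Approx μ q D (f i)) :
    Approx μ q D (fun t => ∑ i ∈ s, f i t) := by
  classical
  induction s using Finset.induction_on with
  | empty => simpa using (L_zero : Approx μ q D (fun _ => 0))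
  | @insert a s has ih =>
    have heq : (fun t => ∑ i ∈ insert a s, f i t)
        = fun t => f a t + ∑ i ∈ s, f i t := by
      funext t; rw [Finset.sum_insert has]
    rw [heq]
    exact L_add hq1 hD (hm a (Finset.mem_insert_self a s))
      (Finset.aestronglyMeasurable_fun_sum s fun i hi => hm i (Finset.mem_insert_of_mem hi))
      (ha a (Finset.mem_insert_self a s))
      (ih (fun i hi => hm i (Finset.mem_insert_of_mem hi))
        (fun i hi => ha i (Finset.mem_insert_of_mem hi)))

/-- choose a positive real below a positive extended real -/
lemma exists_ofReal_lt {ε : ℝ≥0∞} (hε : 0 < ε) : ∃ r : ℝ, 0 < r ∧ ENNReal.ofReal r < ε := by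
  set δ := min ε 1 with hδdef
  have hδ0 : δ ≠ 0 := (lt_min hε zero_lt_one).ne'
  have hδt : δ ≠ ∞ := ne_top_of_le_ne_top ENNReal.one_ne_top (min_le_right _ _)
  refine ⟨(δ / 2).toReal, ?_, ?_⟩
  · refine ENNReal.toReal_pos ?_ ?_
    · simpa using (ENNReal.half_pos hδ0).ne'
    · exact (ENNReal.div_lt_top hδt two_ne_zero).ne
  · rw [ENNReal.ofReal_toReal (ENNReal.div_lt_top hδt two_ne_zero).ne]
    exact (ENNReal.half_lt_self hδ0 hδt).trans_le (min_le_left _ _)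

lemma rpow_trick {pr : ℝ} (hpr : 0 < pr) {a ε : ℝ≥0∞} (hε : 0 < ε)
    (h : a < (min ε 1) ^ pr) : a ^ (1 / pr) < ε := by
  have hmin0 : 0 < min ε 1 := lt_min hε zero_lt_one
  have hmint : min ε 1 ≠ ∞ := ne_top_of_le_ne_top ENNReal.one_ne_top (min_le_right _ _)
  have h2 : a ^ (1 / pr) < ((min ε 1) ^ pr) ^ (1 / pr) :=
    ENNReal.rpow_lt_rpow h (by positivity)
  rw [← ENNReal.rpow_mul, mul_one_div_cancel hpr.ne', ENNReal.rpow_one] at h2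
  exact h2.trans_le (min_le_left _ _)

lemma rpow_target_pos {pr : ℝ} {ε : ℝ≥0∞} (hε : 0 < ε) : 0 < (min ε 1) ^ pr := by
  have hmin0 : 0 < min ε 1 := lt_min hε zero_lt_one
  have hmint : min ε 1 ≠ ∞ := ne_top_of_le_ne_top ENNReal.one_ne_top (min_le_right _ _)
  exact ENNReal.rpow_pos hmin0 hmint

lemma indicator_sub_norm (A B : Set X) (g : X → ℂ) (t : X) :
    ‖A.indicator g t - B.indicator g t‖ ≤ ‖(A ∆ B).indicator g t‖ := by
  by_cases hA : t ∈ A <;> by_cases hB : t ∈ B <;>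
    simp [Set.indicator_apply, hA, hB, Set.mem_symmDiff]

lemma measure_symmDiff_tri (A B C : Set X) : μ (A ∆ B) ≤ μ (A ∆ C) + μ (C ∆ B) :=
  le_trans (measure_mono (by simpa using (symmDiff_triangle A C B)))
    (measure_union_le _ _)

lemma measure_symmDiff_zero {A B : Set X} (h : ∀ᵐ t ∂μ, t ∈ A ↔ t ∈ B) : μ (A ∆ B) = 0 := by
  rw [ae_iff] at h
  refine measure_mono_null ?_ h
  intro t ht
  simp only [Set.mem_symmDiff] at ht
  simp only [Set.mem_setOf_eq]
  tauto

lemma indicator_iUnion_eq_sum {n : ℕ} (T : Fin n → Set X) :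
    (⋃ i, T i).indicator (fun _ => (1:ℂ))
      = fun t => ∑ i, (T i ∩ (⋂ j, ⋂ (_ : j < i), (T j)ᶜ)).indicator (fun _ => (1:ℂ)) t := by
  classical
  funext t
  by_cases ht : t ∈ ⋃ i, T i
  · rw [Set.indicator_of_mem ht]
    obtain ⟨i₀, hi₀⟩ : ∃ i, t ∈ T i := Set.mem_iUnion.mp ht
    set s : Finset (Fin n) := Finset.univ.filter (fun i => t ∈ T i) with hs
    have hne : s.Nonempty := ⟨i₀, by simp [hs, hi₀]⟩
    set m := s.min' hne with hm
    have hmmem : t ∈ T m := by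
      have := s.min'_mem hne
      simp only [hs, Finset.mem_filter] at this
      exact this.2
    symm
    rw [Finset.sum_eq_single m]
    · rw [Set.indicator_of_mem]
      refine ⟨hmmem, ?_⟩
      simp only [Set.mem_iInter, Set.mem_compl_iff]
      intro j hj hjt
      exact absurd (s.min'_le j (by simp [hs, hjt])) (not_le.mpr hj)
    · intro i _ hi
      rw [Set.indicator_of_notMem]
      intro hmem
      obtain ⟨hti, hmin⟩ := hmem
      simp only [Set.mem_iInter, Set.mem_compl_iff] at hmin
      have hmi : m ≤ i := s.min'_le i (by simp [hs, hti])
      exact hmin m (lt_of_le_of_ne hmi (Ne.symm hi)) hmmem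
    · intro h; exact absurd (Finset.mem_univ m) h
  · rw [Set.indicator_of_notMem ht]
    symm
    refine Finset.sum_eq_zero fun i _ => ?_
    refine Set.indicator_of_notMem (fun hmem => ht ?_) _
    exact Set.mem_iUnion.mpr ⟨i, hmem.1⟩

/-- sets that are a.e.-pairwise nested or disjoint: the indicator of a finite union
is approximable whenever each indicator is. -/
lemma union_approx (hq1 : 1 ≤ q) (hD : ∀ f ∈ D, MemLp f q μ) {n : ℕ}
    {C : Fin n → Set X} (hC : ∀ i, MeasurableSet (C i)) {g₀ : X → ℂ}
    (hg₀ : AEStronglyMeasurable g₀ μ)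
    (htri : ∀ i j, (∀ᵐ t ∂μ, t ∈ C i ∩ C j ↔ t ∈ C i) ∨ (∀ᵐ t ∂μ, t ∈ C i ∩ C j ↔ t ∈ C j)
      ∨ (∀ᵐ t ∂μ, t ∉ C i ∩ C j))
    (happ : ∀ i, Approx μ q D ((C i).indicator g₀)) :
    ∀ s : Finset (Fin n), Approx μ q D ((⋃ i ∈ s, C i).indicator g₀) := by
  classical
  intro s
  induction s using Finset.strongInductionOn with
  | _ s ih =>
  rcases Finset.eq_empty_or_nonempty s with rfl | ⟨i, hi⟩
  · simp only [Finset.notMem_empty, Set.iUnion_of_empty, Set.iUnion_empty,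
      Set.indicator_empty]
    exact L_zero
  set s' := s.erase i with hs'
  have hss' : s' ⊂ s := Finset.erase_ssubset hi
  have hmeasU : ∀ u : Finset (Fin n), MeasurableSet (⋃ j ∈ u, C j) :=
    fun u => u.measurableSet_biUnion (fun j _ => hC j)
  by_cases hcase : ∃ j ∈ s', ∀ᵐ t ∂μ, t ∈ C i ∩ C j ↔ t ∈ C i
  · obtain ⟨j, hj, hae⟩ := hcase
    have hsub : ∀ᵐ t ∂μ, t ∈ (⋃ k ∈ s, C k) ↔ t ∈ (⋃ k ∈ s', C k) := by
      filter_upwards [hae] with t ht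
      simp only [Set.mem_iUnion, exists_prop]
      constructor
      · rintro ⟨k, hk, htk⟩
        rcases eq_or_ne k i with rfl | hne
        · exact ⟨j, hj, (ht.mpr htk).2⟩
        · exact ⟨k, Finset.mem_erase.mpr ⟨hne, hk⟩, htk⟩
      · rintro ⟨k, hk, htk⟩
        exact ⟨k, Finset.mem_of_mem_erase hk, htk⟩
    exact L_ae (indicator_ae_eq_of_ae_eq_set
      ((Filter.eventuallyEq_set).mpr hsub)).symm (ih s' hss')
  · push_neg at hcase
    have htri' : ∀ j ∈ s', (∀ᵐ t ∂μ, t ∈ C i ∩ C j ↔ t ∈ C j) ∨ (∀ᵐ t ∂μ, t ∉ C i ∩ C j) := by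
      intro j hj
      rcases htri i j with h | h | h
      · exact absurd h (fun h' => hcase j hj (h'.mono fun t ht => by tauto))
      · exact Or.inl h
      · exact Or.inr h
    set T := s'.filter (fun j => ∀ᵐ t ∂μ, t ∈ C i ∩ C j ↔ t ∈ C j) with hT
    have hTs : T ⊂ s := lt_of_le_of_lt (Finset.filter_subset _ _) hss'
    have hall : ∀ᵐ t ∂μ, ∀ j ∈ s',
        (j ∈ T → (t ∈ C i ∩ C j ↔ t ∈ C j)) ∧ (j ∉ T → t ∉ C i ∩ C j) := by
      rw [Filter.eventually_all_finset]
      intro j hj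
      by_cases hjT : j ∈ T
      · have h := (Finset.mem_filter.mp hjT).2
        filter_upwards [h] with t ht
        exact ⟨fun _ => ht, fun hc => absurd hjT hc⟩
      · have h : ∀ᵐ t ∂μ, t ∉ C i ∩ C j := by
          rcases htri' j hj with h | h
          · exact absurd (Finset.mem_filter.mpr ⟨hj, h⟩) hjT
          · exact h
        filter_upwards [h] with t ht
        exact ⟨fun hc => absurd hc hjT, fun _ => ht⟩
    have hWae : ∀ᵐ t ∂μ, t ∈ ((⋃ k ∈ s', C k) ∩ C i) ↔ t ∈ (⋃ j ∈ T, C j) := by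
      filter_upwards [hall] with t ht
      constructor
      · rintro ⟨hA, hti⟩
        obtain ⟨k, hk, htk⟩ : ∃ k ∈ s', t ∈ C k := by
          simpa only [Set.mem_iUnion, exists_prop] using hA
        by_cases hkT : k ∈ T
        · exact Set.mem_biUnion hkT htk
        · exact absurd ⟨hti, htk⟩ ((ht k hk).2 hkT)
      · intro hW
        obtain ⟨j, hjT, htj⟩ : ∃ j ∈ T, t ∈ C j := by
          simpa only [Set.mem_iUnion, exists_prop] using hW
        have hj' : j ∈ s' := Finset.mem_of_mem_filter j hjT
        have := ((ht j hj').1 hjT).mpr htj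
        exact ⟨Set.mem_biUnion hj' htj, this.1⟩
    have hins : (⋃ k ∈ s, C k) = C i ∪ ⋃ k ∈ s', C k := by
      conv_lhs => rw [← Finset.insert_erase hi]
      rw [Finset.set_biUnion_insert]
    set A := ⋃ k ∈ s', C k with hA
    set W := ⋃ j ∈ T, C j with hW
    have hptId : ∀ t, (C i ∪ A).indicator g₀ t
        = A.indicator g₀ t + (C i).indicator g₀ t - (A ∩ C i).indicator g₀ t := by
      intro t
      by_cases h1 : t ∈ C i <;> by_cases h2 : t ∈ A <;>
        simp [Set.indicator_apply, h1, h2]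
    have haeEq : (fun t => A.indicator g₀ t + (C i).indicator g₀ t - W.indicator g₀ t)
        =ᵐ[μ] (⋃ k ∈ s, C k).indicator g₀ := by
      filter_upwards [indicator_ae_eq_of_ae_eq_set (f := g₀)
        ((Filter.eventuallyEq_set).mpr hWae)] with t ht
      rw [hins, hptId t, ht]
    refine L_ae haeEq ?_
    have happA : Approx μ q D (A.indicator g₀) := ih s' hss'
    have happW : Approx μ q D (W.indicator g₀) := ih T hTs
    have h1 : Approx μ q D (fun t => A.indicator g₀ t + (C i).indicator g₀ t) :=
      L_add hq1 hD (hg₀.indicator (hmeasU s')) (hg₀.indicator (hC i)) happA (happ i)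
    exact L_sub hq1 hD
      ((hg₀.indicator (hmeasU s')).add (hg₀.indicator (hC i)))
      (hg₀.indicator (hmeasU T)) h1 happW

lemma tri (hsimple : ∀ f ∈ D, ∀ g ∈ D, ¬ Subvec μ f g → ¬ Subvec μ g f →
      ∀ᵐ t ∂μ, f t * g t = 0) {f g : X → ℂ} (hf : f ∈ D) (hg : g ∈ D) :
    Subvec μ f g ∨ Subvec μ g f ∨ (∀ᵐ t ∂μ, f t * g t = 0) := by
  by_cases h1 : Subvec μ f g
  · exact Or.inl h1
  by_cases h2 : Subvec μ g f
  · exact Or.inr (Or.inl h2)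
  exact Or.inr (Or.inr (hsimple _ hf _ hg h1 h2))

lemma stage1 (hq1 : 1 ≤ q) (hq0 : q ≠ 0) (hqt : q ≠ ∞)
    (hD : ∀ f ∈ D, MemLp f q μ)
    (hsimple : ∀ f ∈ D, ∀ g ∈ D, ¬ Subvec μ f g → ¬ Subvec μ g f →
      ∀ᵐ t ∂μ, f t * g t = 0)
    (hdense : ∀ A : Set X, MeasurableSet A → μ A < ⊤ → ∀ ε : ℝ, 0 < ε →
      ∃ (n : ℕ) (g : Fin n → (X → ℂ)), (∀ i, g i ∈ D) ∧
        μ (A ∆ (⋃ i, Function.support (g i))) < ENNReal.ofReal ε)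
    {g : X → ℂ} (hg : g ∈ D) (hgs : μ (Function.support g) < ⊤)
    (B : Set X) (hB : MeasurableSet B) : Approx μ q D (B.indicator g) := by
  classical
  have hmg := hD g hg
  set g₀ := hmg.1.mk g with hg₀def
  have hgg₀ : g =ᵐ[μ] g₀ := hmg.1.ae_eq_mk
  have hg₀sm : StronglyMeasurable g₀ := hmg.1.stronglyMeasurable_mk
  have hg₀aesm : AEStronglyMeasurable g₀ μ := hg₀sm.aestronglyMeasurable
  have hmg₀ : MemLp g₀ q μ := hmg.ae_eq hgg₀
  set S₀ := Function.support g₀ with hS₀def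
  have hS₀ : MeasurableSet S₀ := measurableSet_support hg₀sm.measurable
  have hsupp_ae : ∀ᵐ t ∂μ, (t ∈ Function.support g ↔ t ∈ S₀) := by
    filter_upwards [hgg₀] with t ht
    simp [Function.mem_support, hS₀def, ht]
  have hS₀fin : μ S₀ < ⊤ := by
    have : μ S₀ = μ (Function.support g) :=
      measure_congr ((Filter.eventuallyEq_set).mpr (hsupp_ae.mono fun t ht => ht.symm))
    rwa [this]
  set B' := B ∩ S₀ with hB'def
  have hB' : MeasurableSet B' := hB.inter hS₀
  have hB'fin : μ B' < ⊤ := lt_of_le_of_lt (measure_mono Set.inter_subset_right) hS₀fin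
  have hred : B'.indicator g₀ =ᵐ[μ] B.indicator g := by
    filter_upwards [hgg₀] with t ht
    by_cases htB : t ∈ B
    · by_cases htS : t ∈ S₀
      · rw [Set.indicator_of_mem (Set.mem_inter htB htS), Set.indicator_of_mem htB, ht]
      · rw [Set.indicator_of_notMem (fun hc => htS hc.2), Set.indicator_of_mem htB, ht]
        exact (Function.notMem_support.mp htS).symm
    · rw [Set.indicator_of_notMem (fun hc => htB hc.1), Set.indicator_of_notMem htB]
  refine L_ae hred ?_
  intro ε hε
  obtain ⟨r, hr0, hrlt⟩ := exists_ofReal_lt (ENNReal.half_pos hε.ne')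
  obtain ⟨δ, hδ0, hAC⟩ := hmg₀.eLpNorm_indicator_le hq1 hqt hr0
  obtain ⟨m, h, hhD, hUclose⟩ := hdense B' hB' hB'fin δ hδ0
  set U := ⋃ i, Function.support (h i) with hUdef
  have hmh : ∀ i, MemLp (h i) q μ := fun i => hD _ (hhD i)
  set h₀ : Fin m → X → ℂ := fun i => (hmh i).1.mk (h i) with hh₀def
  have hhh₀ : ∀ i, h i =ᵐ[μ] h₀ i := fun i => (hmh i).1.ae_eq_mk
  have hh₀sm : ∀ i, StronglyMeasurable (h₀ i) := fun i => (hmh i).1.stronglyMeasurable_mk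
  set C : Fin m → Set X := fun i => Function.support (h₀ i) ∩ S₀ with hCdef
  have hC : ∀ i, MeasurableSet (C i) :=
    fun i => (measurableSet_support (hh₀sm i).measurable).inter hS₀
  -- trichotomy for the sets C i
  have htri : ∀ i j, (∀ᵐ t ∂μ, t ∈ C i ∩ C j ↔ t ∈ C i) ∨
      (∀ᵐ t ∂μ, t ∈ C i ∩ C j ↔ t ∈ C j) ∨ (∀ᵐ t ∂μ, t ∉ C i ∩ C j) := by
    intro i j
    rcases tri hsimple (hhD i) (hhD j) with hs | hs | hs
    · left
      filter_upwards [hs, hhh₀ i, hhh₀ j] with t h1 h2 h3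
      constructor
      · exact fun hc => hc.1
      · intro hc
        have hi : h i t ≠ 0 := by rw [h2]; exact hc.1
        have hij := h1 hi
        have hj : h₀ j t ≠ 0 := by rw [← h3, ← hij]; exact hi
        exact ⟨hc, hj, hc.2⟩
    · right; left
      filter_upwards [hs, hhh₀ i, hhh₀ j] with t h1 h2 h3
      constructor
      · exact fun hc => hc.2
      · intro hc
        have hj : h j t ≠ 0 := by rw [h3]; exact hc.1
        have hji := h1 hj
        have hi : h₀ i t ≠ 0 := by rw [← h2, ← hji]; exact hj
        exact ⟨⟨hi, hc.2⟩, hc⟩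
    · right; right
      filter_upwards [hs, hhh₀ i, hhh₀ j] with t h1 h2 h3
      rintro ⟨⟨hi, _⟩, hj, _⟩
      have hi' : h i t ≠ 0 := by rw [h2]; exact hi
      have hj' : h j t ≠ 0 := by rw [h3]; exact hj
      rcases mul_eq_zero.mp h1 with hc | hc
      exacts [hi' hc, hj' hc]
  -- each piece is approximable
  have happ : ∀ i, Approx μ q D ((C i).indicator g₀) := by
    intro i
    rcases tri hsimple (hhD i) hg with hs | hs | hs
    · refine L_ae (f := h i) ?_ (L_mem (hhD i))
      filter_upwards [hgg₀, hhh₀ i, hs] with t h1 h2 h3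
      by_cases htC : t ∈ C i
      · have hne : h i t ≠ 0 := by rw [h2]; exact htC.1
        rw [Set.indicator_of_mem htC, ← h1, ← h3 hne]
      · rw [Set.indicator_of_notMem htC]
        by_contra hne
        have hne' : h i t ≠ 0 := hne
        have hgt : g t ≠ 0 := by rw [← h3 hne']; exact hne'
        refine htC ⟨?_, ?_⟩
        · show h₀ i t ≠ 0
          rw [← h2]; exact hne'
        · show g₀ t ≠ 0
          rw [← h1]; exact hgt
    · refine L_ae (f := g) ?_ (L_mem hg)
      filter_upwards [hgg₀, hhh₀ i, hs] with t h1 h2 h3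
      by_cases htC : t ∈ C i
      · rw [Set.indicator_of_mem htC, h1]
      · rw [Set.indicator_of_notMem htC]
        by_contra hne
        have hgt : g t ≠ 0 := hne
        have hht : h i t ≠ 0 := by rw [← h3 hgt]; exact hgt
        refine htC ⟨?_, ?_⟩
        · show h₀ i t ≠ 0
          rw [← h2]; exact hht
        · show g₀ t ≠ 0
          rw [← h1]; exact hgt
    · refine L_ae (f := fun _ => (0:ℂ)) ?_ L_zero
      filter_upwards [hgg₀, hhh₀ i, hs] with t h1 h2 h3
      by_cases htC : t ∈ C i
      · exfalso
        have hi : h i t ≠ 0 := by rw [h2]; exact htC.1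
        have hgt : g t ≠ 0 := by rw [h1]; exact htC.2
        rcases mul_eq_zero.mp h3 with hc | hc
        exacts [hi hc, hgt hc]
      · rw [Set.indicator_of_notMem htC]
  have hunion := union_approx hq1 hD hC hg₀aesm htri happ Finset.univ
  have huniv : (⋃ i ∈ (Finset.univ : Finset (Fin m)), C i) = ⋃ i, C i := by simp
  rw [huniv] at hunion
  set V := ⋃ i, C i with hVdef
  have hVmeas : MeasurableSet V := MeasurableSet.iUnion hC
  -- measure of the symmetric difference
  have hVae : ∀ᵐ t ∂μ, t ∈ U ∩ S₀ ↔ t ∈ V := by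
    have hall : ∀ᵐ t ∂μ, ∀ i, h i t = h₀ i t := ae_all_iff.mpr hhh₀
    filter_upwards [hall] with t ht
    simp only [hUdef, hVdef, hCdef, Set.mem_iUnion, Set.mem_inter_iff,
      Function.mem_support]
    constructor
    · rintro ⟨⟨i, hi⟩, hS⟩
      exact ⟨i, by rw [← ht i]; exact hi, hS⟩
    · rintro ⟨i, hi, hS⟩
      exact ⟨⟨i, by rw [ht i]; exact hi⟩, hS⟩
  have hmeasV : μ (B' ∆ V) ≤ ENNReal.ofReal δ := by
    calc μ (B' ∆ V) ≤ μ (B' ∆ (U ∩ S₀)) + μ ((U ∩ S₀) ∆ V) := measure_symmDiff_tri _ _ _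
      _ = μ (B' ∆ (U ∩ S₀)) := by rw [measure_symmDiff_zero hVae, add_zero]
      _ ≤ μ (B' ∆ U) := by
          refine measure_mono ?_
          intro t ht
          rcases Set.mem_symmDiff.mp ht with ⟨h1, h2⟩ | ⟨h1, h2⟩
          · exact Set.mem_symmDiff.mpr (Or.inl ⟨h1, fun hc => h2 ⟨hc, h1.2⟩⟩)
          · exact Set.mem_symmDiff.mpr (Or.inr ⟨h1.1, fun hc => h2 hc⟩)
      _ ≤ ENNReal.ofReal δ := hUclose.le
  obtain ⟨nn, c, gg, hggD, hlt⟩ := hunion (ε / 2) (ENNReal.half_pos hε.ne')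
  refine ⟨nn, c, gg, hggD, ?_⟩
  have heq : (fun t => B'.indicator g₀ t - ∑ i, c i * gg i t)
      = fun t => (B'.indicator g₀ t - V.indicator g₀ t)
        + (V.indicator g₀ t - ∑ i, c i * gg i t) := by funext t; ring
  rw [heq]
  have hfirst : eLpNorm (fun t => B'.indicator g₀ t - V.indicator g₀ t) q μ
      ≤ ENNReal.ofReal r := by
    refine le_trans (eLpNorm_mono (indicator_sub_norm B' V g₀)) ?_
    exact hAC _ (hB'.symmDiff hVmeas) hmeasV
  calc eLpNorm _ q μ
      ≤ eLpNorm (fun t => B'.indicator g₀ t - V.indicator g₀ t) q μ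
        + eLpNorm (fun t => V.indicator g₀ t - ∑ i, c i * gg i t) q μ :=
        eLpNorm_add_le ((hg₀aesm.indicator hB').sub (hg₀aesm.indicator hVmeas))
          ((hg₀aesm.indicator hVmeas).sub (comboAESM hD c hggD)) hq1
    _ < ε / 2 + ε / 2 := ENNReal.add_lt_add (lt_of_le_of_lt hfirst hrlt) hlt
    _ = ε := ENNReal.add_halves ε

lemma keyLemma (hq1 : 1 ≤ q) (hq0 : q ≠ 0) (hqt : q ≠ ⊤)
    (hD : ∀ f ∈ D, MemLp f q μ)
    (hsimple : ∀ f ∈ D, ∀ g ∈ D, ¬ Subvec μ f g → ¬ Subvec μ g f →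
      ∀ᵐ t ∂μ, f t * g t = 0)
    (hdense : ∀ A : Set X, MeasurableSet A → μ A < ⊤ → ∀ ε : ℝ, 0 < ε →
      ∃ (n : ℕ) (g : Fin n → (X → ℂ)), (∀ i, g i ∈ D) ∧
        μ (A ∆ (⋃ i, Function.support (g i))) < ENNReal.ofReal ε)
    {g : X → ℂ} (hg : g ∈ D) (hgs : μ (Function.support g) < ⊤)
    (E : Set X) (hE : MeasurableSet E) :
    Approx μ q D ((Function.support g ∩ E).indicator (fun _ => (1:ℂ))) := by
  classical
  have hqr : 0 < q.toReal := ENNReal.toReal_pos hq0 hqt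
  have hmg := hD g hg
  set g₀ := hmg.1.mk g with hg₀def
  have hgg₀ : g =ᵐ[μ] g₀ := hmg.1.ae_eq_mk
  have hg₀sm : StronglyMeasurable g₀ := hmg.1.stronglyMeasurable_mk
  have hg₀aesm : AEStronglyMeasurable g₀ μ := hg₀sm.aestronglyMeasurable
  have hmg₀ : MemLp g₀ q μ := hmg.ae_eq hgg₀
  set S₀ := Function.support g₀ with hS₀def
  have hS₀ : MeasurableSet S₀ := measurableSet_support hg₀sm.measurable
  have hsupp_ae : ∀ᵐ t ∂μ, (t ∈ Function.support g ↔ t ∈ S₀) := by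
    filter_upwards [hgg₀] with t ht
    simp [Function.mem_support, hS₀def, ht]
  have hS₀fin : μ S₀ < ⊤ := by
    have : μ S₀ = μ (Function.support g) :=
      measure_congr ((Filter.eventuallyEq_set).mpr (hsupp_ae.mono fun t ht => ht.symm))
    rwa [this]
  -- reduce to the measurable-support version
  have hredS : (S₀ ∩ E).indicator (fun _ => (1:ℂ))
      =ᵐ[μ] (Function.support g ∩ E).indicator (fun _ => (1:ℂ)) := by
    refine indicator_ae_eq_of_ae_eq_set ((Filter.eventuallyEq_set).mpr ?_)
    filter_upwards [hsupp_ae] with t ht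
    exact and_congr_left (fun _ => ht.symm)
  refine L_ae hredS ?_
  -- indicators of measurable sets against g₀ are approximable
  have hst1 : ∀ B : Set X, MeasurableSet B → Approx μ q D (B.indicator g₀) := by
    intro B hB
    refine L_ae ?_ (stage1 hq1 hq0 hqt hD hsimple hdense hg hgs B hB)
    filter_upwards [hgg₀] with t ht
    by_cases htB : t ∈ B <;> simp [Set.indicator_apply, htB, ht]
  -- simple multiples of g₀ are approximable
  have hmul : ∀ σ : SimpleFunc X ℂ, Approx μ q D (fun t => σ t * g₀ t) := by
    intro σ
    refine SimpleFunc.induction (motive := fun σ : SimpleFunc X ℂ =>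
      Approx μ q D (fun t => σ t * g₀ t)) ?_ ?_ σ
    · intro c s hs
      have heq : (fun t => (SimpleFunc.piecewise s hs (SimpleFunc.const X c)
          (SimpleFunc.const X 0)) t * g₀ t) = fun t => c * (s.indicator g₀ t) := by
        funext t
        by_cases hts : t ∈ s <;>
          simp [SimpleFunc.piecewise_apply, hts, Set.indicator_apply]
      rw [heq]
      exact L_smul c (hst1 s hs)
    · intro σ₁ σ₂ _ h1 h2
      have heq : (fun t => (σ₁ + σ₂) t * g₀ t)
          = fun t => σ₁ t * g₀ t + σ₂ t * g₀ t := by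
        funext t
        simp [add_mul]
      rw [heq]
      exact L_add hq1 hD (σ₁.stronglyMeasurable.aestronglyMeasurable.mul hg₀aesm)
        (σ₂.stronglyMeasurable.aestronglyMeasurable.mul hg₀aesm) h1 h2
  -- the truncation sets
  set T : ℕ → Set X := fun k => {t | 1/(k+1 : ℝ) ≤ ‖g₀ t‖} with hTdef
  have hTmeas : ∀ k, MeasurableSet (T k) :=
    fun k => measurableSet_le measurable_const hg₀sm.measurable.norm
  -- approximability of the truncated indicator, for every k and measurable set
  have htrunc : ∀ (k : ℕ) (W : Set X), MeasurableSet W →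
      Approx μ q D ((W ∩ T k).indicator (fun _ => (1:ℂ))) := by
    intro k W hW
    set A := W ∩ T k with hAdef
    have hA : MeasurableSet A := hW.inter (hTmeas k)
    set ψ : X → ℂ := A.indicator (fun t => (g₀ t)⁻¹) with hψdef
    have hψmeas : Measurable ψ := (hg₀sm.measurable.inv).indicator hA
    have hψbdd : ∀ t, ‖ψ t‖ ≤ (k+1 : ℝ) := by
      intro t
      by_cases ht : t ∈ A
      · rw [hψdef, Set.indicator_of_mem ht, norm_inv]
        have h1 : 1/(k+1 : ℝ) ≤ ‖g₀ t‖ := ht.2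
        have hpos : (0:ℝ) < 1/(k+1 : ℝ) := by positivity
        calc ‖g₀ t‖⁻¹ ≤ (1/(k+1 : ℝ))⁻¹ := by
              exact inv_anti₀ hpos h1
          _ = (k+1 : ℝ) := by rw [one_div, inv_inv]
      · rw [hψdef, Set.indicator_of_notMem ht]
        simp
        positivity
    have hid : A.indicator (fun _ => (1:ℂ)) = fun t => ψ t * g₀ t := by
      funext t
      by_cases ht : t ∈ A
      · rw [Set.indicator_of_mem ht, hψdef, Set.indicator_of_mem ht]
        have hne : g₀ t ≠ 0 := by
          intro hc
          have h1 : 1/(k+1 : ℝ) ≤ ‖g₀ t‖ := ht.2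
          rw [hc, norm_zero] at h1
          have : (0:ℝ) < 1/(k+1:ℝ) := by positivity
          linarith
        rw [inv_mul_cancel₀ hne]
      · rw [Set.indicator_of_notMem ht, hψdef, Set.indicator_of_notMem ht, zero_mul]
    rw [hAdef] at hid ⊢
    rw [hid]
    -- approximate ψ by simple functions
    set σ : ℕ → SimpleFunc X ℂ :=
      fun n => SimpleFunc.approxOn ψ hψmeas Set.univ 0 (Set.mem_univ 0) n with hσdef
    refine L_close hq1 hD ((hψmeas.mul hg₀sm.measurable).aestronglyMeasurable) ?_
    intro δ hδ
    -- dominated convergence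
    set F : ℕ → X → ℂ := fun n t => ψ t * g₀ t - σ n t * g₀ t with hFdef
    have hFm : ∀ n, Measurable (F n) :=
      fun n => (hψmeas.mul hg₀sm.measurable).sub ((σ n).measurable.mul hg₀sm.measurable)
    set K : ℝ≥0 := 3 * ((k:ℝ≥0) + 1) with hKdef
    have hσψ : ∀ n t, ‖ψ t - σ n t‖₊ ≤ 3 * ‖ψ t‖₊ := by
      intro n t
      rw [← NNReal.coe_le_coe]
      push_cast
      have h2 := SimpleFunc.norm_approxOn_zero_le hψmeas (Set.mem_univ (0:ℂ)) t n
      calc ‖ψ t - σ n t‖ ≤ ‖ψ t‖ + ‖σ n t‖ := norm_sub_le _ _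
        _ ≤ ‖ψ t‖ + (‖ψ t‖ + ‖ψ t‖) := by
            have : ‖σ n t‖ ≤ ‖ψ t‖ + ‖ψ t‖ := h2
            linarith
        _ = 3 * ‖ψ t‖ := by ring
    have hψK : ∀ t, ‖ψ t‖₊ ≤ ((k:ℝ≥0) + 1) := by
      intro t
      rw [← NNReal.coe_le_coe]
      push_cast
      simpa using hψbdd t
    have hbnd : ∀ n t, (‖F n t‖₊ : ℝ≥0∞) ^ q.toReal
        ≤ ((K : ℝ≥0∞) * ‖g₀ t‖₊) ^ q.toReal := by
      intro n t
      refine ENNReal.rpow_le_rpow ?_ hqr.le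
      have hFt : F n t = (ψ t - σ n t) * g₀ t := by rw [hFdef]; ring
      rw [hFt, nnnorm_mul]
      push_cast
      refine mul_le_mul_left ?_ _
      calc (‖ψ t - σ n t‖₊ : ℝ≥0∞) ≤ ((3 * ‖ψ t‖₊ : ℝ≥0) : ℝ≥0∞) := by
            exact_mod_cast hσψ n t
        _ ≤ (K : ℝ≥0∞) := by
            rw [hKdef]
            exact_mod_cast mul_le_mul_right (hψK t) 3
    have hglt : (∫⁻ t, (‖g₀ t‖₊ : ℝ≥0∞) ^ q.toReal ∂μ) < ⊤ :=
      lintegral_rpow_enorm_lt_top_of_eLpNorm_lt_top hq0 hqt hmg₀.2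
    have hfin : (∫⁻ t, ((K : ℝ≥0∞) * ‖g₀ t‖₊) ^ q.toReal ∂μ) ≠ ⊤ := by
      have heq2 : (fun t => ((K : ℝ≥0∞) * ‖g₀ t‖₊) ^ q.toReal)
          = fun t => (K : ℝ≥0∞) ^ q.toReal * (‖g₀ t‖₊ : ℝ≥0∞) ^ q.toReal := by
        funext t
        exact ENNReal.mul_rpow_of_nonneg _ _ hqr.le
      rw [heq2, lintegral_const_mul _ (hg₀sm.measurable.nnnorm.coe_nnreal_ennreal.pow_const _)]
      exact ENNReal.mul_ne_top (ENNReal.rpow_ne_top_of_nonneg hqr.le ENNReal.coe_ne_top) hglt.ne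
    have hFlim : ∀ t, Filter.Tendsto (fun n => (‖F n t‖₊ : ℝ≥0∞) ^ q.toReal)
        Filter.atTop (nhds 0) := by
      intro t
      have h1 : Filter.Tendsto (fun n => σ n t) Filter.atTop (nhds (ψ t)) :=
        SimpleFunc.tendsto_approxOn hψmeas (Set.mem_univ 0) (by simp)
      have h2 : Filter.Tendsto (fun n => F n t) Filter.atTop (nhds 0) := by
        have h3 : Filter.Tendsto (fun n => ψ t * g₀ t - σ n t * g₀ t) Filter.atTop
            (nhds (ψ t * g₀ t - ψ t * g₀ t)) :=
          Filter.Tendsto.sub tendsto_const_nhds (h1.mul tendsto_const_nhds)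
        simpa using h3
      have h4 := (ENNReal.tendsto_coe.mpr h2.nnnorm)
      have h5 := (ENNReal.continuous_rpow_const (y := q.toReal)).continuousAt.tendsto.comp h4
      simpa [ENNReal.zero_rpow_of_pos hqr, Function.comp_def] using h5
    have hIlim : Filter.Tendsto (fun n => ∫⁻ t, (‖F n t‖₊ : ℝ≥0∞) ^ q.toReal ∂μ)
        Filter.atTop (nhds 0) := by
      have := tendsto_lintegral_of_dominated_convergence
        (F := fun n t => (‖F n t‖₊ : ℝ≥0∞) ^ q.toReal)
        (f := fun _ => (0:ℝ≥0∞))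
        (fun t => ((K : ℝ≥0∞) * ‖g₀ t‖₊) ^ q.toReal)
        (fun n => (hFm n).nnnorm.coe_nnreal_ennreal.pow_const _)
        (fun n => Filter.Eventually.of_forall (hbnd n)) hfin
        (Filter.Eventually.of_forall hFlim)
      simpa using this
    have hev : ∀ᶠ n in Filter.atTop,
        (∫⁻ t, (‖F n t‖₊ : ℝ≥0∞) ^ q.toReal ∂μ) < (min δ 1) ^ q.toReal :=
      hIlim.eventually_lt_const (rpow_target_pos hδ)
    obtain ⟨n, hn⟩ := hev.exists
    refine ⟨fun t => σ n t * g₀ t,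
      ((σ n).stronglyMeasurable.aestronglyMeasurable.mul hg₀aesm), hmul (σ n), ?_⟩
    have : eLpNorm (F n) q μ
        = (∫⁻ t, (‖F n t‖₊ : ℝ≥0∞) ^ q.toReal ∂μ) ^ (1 / q.toReal) :=
      eLpNorm_eq_lintegral_rpow_enorm_toReal hq0 hqt
    rw [hFdef] at this
    rw [this]
    exact rpow_trick hqr hδ hn
  -- now split off the small part
  have hW : MeasurableSet (S₀ ∩ E) := hS₀.inter hE
  refine L_close hq1 hD ((measurable_const.indicator hW).aestronglyMeasurable) ?_
  intro δ hδ
  -- choose k such that μ ((S₀ ∩ E) \ T k) is small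
  set Dk : ℕ → Set X := fun k => S₀ \ T k with hDkdef
  have hDkmeas : ∀ k, MeasurableSet (Dk k) := fun k => hS₀.diff (hTmeas k)
  have hanti : Antitone Dk := by
    intro a b hab
    refine Set.diff_subset_diff_right ?_
    intro t ht
    have h1 : 1/(b+1 : ℝ) ≤ 1/(a+1 : ℝ) := by
      apply one_div_le_one_div_of_le
      · positivity
      · exact_mod_cast add_le_add_left (Nat.cast_le.mpr hab) 1
    exact le_trans h1 ht
  have hiInter : (⋂ k, Dk k) = ∅ := by
    ext t
    simp only [Set.mem_iInter, Set.mem_empty_iff_false, iff_false]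
    intro hc
    have ht0 : t ∈ S₀ := (hc 0).1
    have hpos : 0 < ‖g₀ t‖ := by
      rw [norm_pos_iff]
      exact ht0
    obtain ⟨k, hk⟩ := exists_nat_one_div_lt hpos
    exact (hc k).2 hk.le
  have htend : Filter.Tendsto (fun k => μ (Dk k)) Filter.atTop (nhds 0) := by
    have := tendsto_measure_iInter_atTop (μ := μ) (fun k => (hDkmeas k).nullMeasurableSet)
      hanti ⟨0, (lt_of_le_of_lt (measure_mono Set.diff_subset) hS₀fin).ne⟩
    rw [hiInter] at this
    simpa [Function.comp_def] using this
  have hev : ∀ᶠ k in Filter.atTop, μ (Dk k) < (min δ 1) ^ q.toReal :=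
    htend.eventually_lt_const (rpow_target_pos hδ)
  obtain ⟨k, hk⟩ := hev.exists
  refine ⟨((S₀ ∩ E) ∩ T k).indicator (fun _ => (1:ℂ)),
    (measurable_const.indicator (hW.inter (hTmeas k))).aestronglyMeasurable,
    htrunc k _ hW, ?_⟩
  have hptw : ∀ t, ‖(S₀ ∩ E).indicator (fun _ => (1:ℂ)) t
      - ((S₀ ∩ E) ∩ T k).indicator (fun _ => (1:ℂ)) t‖
      ≤ ‖(Dk k).indicator (fun _ => (1:ℂ)) t‖ := by
    intro t
    by_cases h1 : t ∈ S₀ ∩ E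
    · by_cases h2 : t ∈ T k
      · rw [Set.indicator_of_mem h1, Set.indicator_of_mem (Set.mem_inter h1 h2)]
        simp
      · rw [Set.indicator_of_mem h1,
          Set.indicator_of_notMem (fun hc : t ∈ (S₀ ∩ E) ∩ T k => h2 hc.2),
          Set.indicator_of_mem (Set.mem_diff_of_mem h1.1 h2)]
        simp
    · rw [Set.indicator_of_notMem h1,
        Set.indicator_of_notMem (fun hc : t ∈ (S₀ ∩ E) ∩ T k => h1 hc.1)]
      simp
  calc eLpNorm (fun t => (S₀ ∩ E).indicator (fun _ => (1:ℂ)) t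
        - ((S₀ ∩ E) ∩ T k).indicator (fun _ => (1:ℂ)) t) q μ
      ≤ eLpNorm ((Dk k).indicator (fun _ => (1:ℂ))) q μ := eLpNorm_mono hptw
    _ = ‖(1:ℂ)‖₊ * μ (Dk k) ^ (1 / q.toReal) :=
        eLpNorm_indicator_const (hDkmeas k) hq0 hqt
    _ = μ (Dk k) ^ (1 / q.toReal) := by simp
    _ < δ := rpow_trick hqr hδ hk

end
end Stmt9Aux

open Stmt9Aux in
theorem stmt9 (μ : Measure X) (p : ℝ) (hp : 1 ≤ p) (D : Set (X → ℂ))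
    (hmem : ∀ f ∈ D, MemLp f (ENNReal.ofReal p) μ)
    -- `D` is a lower semilattice under the subvector order:
    (hlat : ∀ f ∈ D, ∀ g ∈ D, ∃ h ∈ D, Subvec μ h f ∧ Subvec μ h g ∧
      ∀ k ∈ D, Subvec μ k f → Subvec μ k g → Subvec μ k h)
    -- `D` is simple: incomparable elements are disjointly supported:
    (hsimple : ∀ f ∈ D, ∀ g ∈ D, ¬ Subvec μ f g → ¬ Subvec μ g f →
      ∀ᵐ t ∂μ, f t * g t = 0)
    -- the upper semilattice generated by the supports of members of `D` is dense:
    (hdense : ∀ A : Set X, MeasurableSet A → μ A < ⊤ → ∀ ε : ℝ, 0 < ε →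
      ∃ (n : ℕ) (g : Fin n → (X → ℂ)), (∀ i, g i ∈ D) ∧
        μ (A ∆ (⋃ i, Function.support (g i))) < ENNReal.ofReal ε) :
    -- conclusion: the linear span of `D` is dense in `L^p(Ω)`:
    ∀ f : X → ℂ, MemLp f (ENNReal.ofReal p) μ → ∀ ε : ℝ, 0 < ε →
      ∃ (n : ℕ) (c : Fin n → ℂ) (g : Fin n → (X → ℂ)), (∀ i, g i ∈ D) ∧
        eLpNorm (fun t => f t - ∑ i, c i * g i t) (ENNReal.ofReal p) μ
          < ENNReal.ofReal ε := by
  classical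
  intro f hf ε hε
  set q := ENNReal.ofReal p with hqdef
  have hq1 : 1 ≤ q := ENNReal.one_le_ofReal.mpr hp
  have hq0 : q ≠ 0 := (ENNReal.ofReal_pos.mpr (lt_of_lt_of_le one_pos hp)).ne'
  have hqt : q ≠ ⊤ := ENNReal.ofReal_ne_top
  have hqr : 0 < q.toReal := ENNReal.toReal_pos hq0 hqt
  suffices h : Approx μ q D f by
    exact h (ENNReal.ofReal ε) (ENNReal.ofReal_pos.mpr hε)
  clear hε
  haveI : Fact (1 ≤ q) := ⟨hq1⟩
  refine MemLp.induction (μ := μ) (p := q) hqt (fun f => Approx μ q D f) ?_ ?_ ?_ ?_ hf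
  · -- indicators
    intro c s hs hsfin
    have heq : s.indicator (fun _ => c) = fun t => c * s.indicator (fun _ => (1:ℂ)) t := by
      funext t
      by_cases hts : t ∈ s <;> simp [Set.indicator_apply, hts]
    rw [heq]
    refine L_smul c ?_
    -- main density step : approximate the indicator of s
    refine L_close hq1 hmem ((measurable_const.indicator hs).aestronglyMeasurable) ?_
    intro δ hδ
    obtain ⟨r, hr0, hrlt⟩ := exists_ofReal_lt (rpow_target_pos (pr := q.toReal) hδ)
    obtain ⟨m, h, hhD, hU⟩ := hdense s hs hsfin r hr0
    set U := ⋃ i, Function.support (h i) with hUdef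
    have hUfin : μ U < ⊤ := by
      have hsub : U ⊆ s ∪ (s ∆ U) := by
        intro t ht
        by_cases hts : t ∈ s
        · exact Or.inl hts
        · exact Or.inr (Set.mem_symmDiff.mpr (Or.inr ⟨ht, hts⟩))
      calc μ U ≤ μ s + μ (s ∆ U) := le_trans (measure_mono hsub) (measure_union_le _ _)
        _ < ⊤ := ENNReal.add_lt_top.mpr ⟨hsfin, lt_of_lt_of_le hU le_top⟩
    have hmh : ∀ i, MemLp (h i) q μ := fun i => hmem _ (hhD i)
    set h₀ : Fin m → X → ℂ := fun i => (hmh i).1.mk (h i) with hh₀def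
    have hhh₀ : ∀ i, h i =ᵐ[μ] h₀ i := fun i => (hmh i).1.ae_eq_mk
    have hh₀sm : ∀ i, StronglyMeasurable (h₀ i) := fun i => (hmh i).1.stronglyMeasurable_mk
    set S₀ : Fin m → Set X := fun i => Function.support (h₀ i) with hS₀def
    have hS₀meas : ∀ i, MeasurableSet (S₀ i) :=
      fun i => measurableSet_support (hh₀sm i).measurable
    set E : Fin m → Set X := fun i => ⋂ j, ⋂ (_ : j < i), (S₀ j)ᶜ with hEdef
    have hEmeas : ∀ i, MeasurableSet (E i) :=
      fun i => MeasurableSet.iInter fun j => MeasurableSet.iInter fun _ => (hS₀meas j).compl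
    -- each support has finite measure
    have hfin_i : ∀ i, μ (Function.support (h i)) < ⊤ := by
      intro i
      refine lt_of_le_of_lt (measure_mono ?_) hUfin
      exact Set.subset_iUnion (fun i => Function.support (h i)) i
    -- the a.e. identification of supports
    have hsupp_ae : ∀ i, ∀ᵐ t ∂μ, (t ∈ Function.support (h i) ↔ t ∈ S₀ i) := by
      intro i
      filter_upwards [hhh₀ i] with t ht
      simp [Function.mem_support, hS₀def, ht]
    -- each piece is approximable
    have happ : ∀ i, Approx μ q D ((S₀ i ∩ E i).indicator (fun _ => (1:ℂ))) := by
      intro i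
      refine L_ae ?_ (keyLemma hq1 hq0 hqt hmem hsimple hdense (hhD i) (hfin_i i)
        (E i) (hEmeas i))
      refine indicator_ae_eq_of_ae_eq_set ((Filter.eventuallyEq_set).mpr ?_)
      filter_upwards [hsupp_ae i] with t ht
      exact and_congr_left (fun _ => ht)
    have hsum : Approx μ q D
        (fun t => ∑ i, (S₀ i ∩ E i).indicator (fun _ => (1:ℂ)) t) := by
      have := L_sum hq1 hmem Finset.univ
        (fun i => (S₀ i ∩ E i).indicator (fun _ => (1:ℂ)))
        (fun i _ => (measurable_const.indicator ((hS₀meas i).inter (hEmeas i))).aestronglyMeasurable)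
        (fun i _ => happ i)
      exact this
    set V := ⋃ i, S₀ i with hVdef
    have hVmeas : MeasurableSet V := MeasurableSet.iUnion hS₀meas
    have hVapp : Approx μ q D (V.indicator (fun _ => (1:ℂ))) := by
      rw [hVdef, indicator_iUnion_eq_sum S₀]
      exact hsum
    refine ⟨V.indicator (fun _ => (1:ℂ)),
      (measurable_const.indicator hVmeas).aestronglyMeasurable, hVapp, ?_⟩
    -- the measure estimate
    have hUV : μ (U ∆ V) = 0 := by
      refine measure_symmDiff_zero ?_
      have hall : ∀ᵐ t ∂μ, ∀ i, h i t = h₀ i t := ae_all_iff.mpr hhh₀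
      filter_upwards [hall] with t ht
      simp only [hUdef, hVdef, hS₀def, Set.mem_iUnion, Function.mem_support]
      constructor
      · rintro ⟨i, hi⟩; exact ⟨i, by rw [← ht i]; exact hi⟩
      · rintro ⟨i, hi⟩; exact ⟨i, by rw [ht i]; exact hi⟩
    have hmeasV : μ (s ∆ V) < (min δ 1) ^ q.toReal := by
      calc μ (s ∆ V) ≤ μ (s ∆ U) + μ (U ∆ V) := measure_symmDiff_tri _ _ _
        _ = μ (s ∆ U) := by rw [hUV, add_zero]
        _ < ENNReal.ofReal r := hU
        _ < (min δ 1) ^ q.toReal := hrlt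
    calc eLpNorm (fun t => s.indicator (fun _ => (1:ℂ)) t
          - V.indicator (fun _ => (1:ℂ)) t) q μ
        ≤ eLpNorm ((s ∆ V).indicator (fun _ => (1:ℂ))) q μ :=
          eLpNorm_mono (indicator_sub_norm s V _)
      _ = ‖(1:ℂ)‖₊ * μ (s ∆ V) ^ (1 / q.toReal) :=
          eLpNorm_indicator_const (hs.symmDiff hVmeas) hq0 hqt
      _ = μ (s ∆ V) ^ (1 / q.toReal) := by simp
      _ < δ := rpow_trick hqr hδ hmeasV
  · -- additivity
    intro f g _ hfm hgm hPf hPg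
    exact L_add hq1 hmem hfm.aestronglyMeasurable hgm.aestronglyMeasurable hPf hPg
  · -- closedness in Lp
    refine isClosed_of_closure_subset ?_
    intro f hfcl
    show Approx μ q D ⇑f
    refine L_close hq1 hmem (Lp.aestronglyMeasurable f) ?_
    intro δ hδ
    rw [EMetric.mem_closure_iff] at hfcl
    obtain ⟨f', hf'mem, hdist⟩ := hfcl δ hδ
    refine ⟨⇑f', Lp.aestronglyMeasurable f', hf'mem, ?_⟩
    rw [show (fun t => f t - f' t) = (⇑f - ⇑f') from rfl, ← Lp.edist_def]
    exact hdist
  · -- a.e. congruence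
    intro f g hfg _ hPf
    exact L_ae hfg hPf
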